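/- Let M be a set of mutually singular probability measures on a measurable space, let ε > 0, and let (μ_n) be a sequence of finite convex combinations of measures in M with associated pairwise disjoint measurable sets (A_n) satisfying: (1) μ_n(A_n) ≥ ε for all n; (2) for each n, either there is a unique n′ with μ_n ≻′ μ_{n′}, or μ_n(A_{n′}) = 0 for all n′ ≠ n; (3) whenever it is not the case that μ_n ≻ μ_m (n ≠ m), μ_n(A_m) = 0. Then for any finitely supported sequence of scalars (c_n), ‖Σ c_n μ_n‖ ≥ (2ε/3) Σ |c_n|, where ‖·‖ is the total variation norm. Consequently (μ_n) is equivalent to the unit vector basis of ℓ¹. -/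

import Mathlib

open MeasureTheory ENNReal

/-- The relation `≻′` of the paper for the family `(μ n, A n)`: `μ n ≻′ μ n'` iff there is
a scalar `a ∈ (0, μ n (A n) / (2 · μ n' (A n'))]` with
`(μ n)|_{∪_{m ≠ n} A m} = a • (μ n')|_{∪_{m ≠ n} A m}` and `μ n' (A n) = 0`. -/
def wsucc {Ω : Type*} [MeasurableSpace Ω] (μ : ℕ → Measure Ω) (A : ℕ → Set Ω)
    (n n' : ℕ) : Prop :=
  ∃ a : ℝ≥0∞, 0 < a ∧ a ≤ μ n (A n) / (2 * μ n' (A n')) ∧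
    (μ n).restrict (⋃ m ∈ {m : ℕ | m ≠ n}, A m)
      = a • (μ n').restrict (⋃ m ∈ {m : ℕ | m ≠ n}, A m) ∧
    μ n' (A n) = 0

section aux

attribute [local instance] Classical.propDecidable

variable {Ω : Type*} [MeasurableSpace Ω] (μ : ℕ → Measure Ω) (A : ℕ → Set Ω)

lemma wsucc_eval (hmeas : ∀ n, MeasurableSet (A n)) {n n' : ℕ} {a : ℝ≥0∞}
    (hres : (μ n).restrict (⋃ m ∈ {m : ℕ | m ≠ n}, A m)
      = a • (μ n').restrict (⋃ m ∈ {m : ℕ | m ≠ n}, A m))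
    {j : ℕ} (hj : j ≠ n) : μ n (A j) = a * μ n' (A j) := by
  have hsub : A j ⊆ ⋃ m ∈ {m : ℕ | m ≠ n}, A m :=
    Set.subset_biUnion_of_mem (u := fun m => A m) (show j ∈ {m : ℕ | m ≠ n} from hj)
  have h1 : (μ n).restrict (⋃ m ∈ {m : ℕ | m ≠ n}, A m) (A j) = μ n (A j) := by
    rw [Measure.restrict_apply (hmeas j), Set.inter_eq_self_of_subset_left hsub]
  have h2 : (a • (μ n').restrict (⋃ m ∈ {m : ℕ | m ≠ n}, A m)) (A j) = a * μ n' (A j) := by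
    rw [Measure.smul_apply, Measure.restrict_apply (hmeas j),
      Set.inter_eq_self_of_subset_left hsub, smul_eq_mul]
  rw [← h1, hres, h2]

/-- `n` has a (unique) `wsucc`-successor. -/
def act (n : ℕ) : Prop := ∃! n', wsucc μ A n n'

noncomputable def Fs (n : ℕ) : ℕ := if h : act μ A n then h.choose else n

lemma wsucc_Fs {n : ℕ} (h : act μ A n) : wsucc μ A n (Fs μ A n) := by
  rw [Fs, dif_pos h]; exact h.choose_spec.1

lemma eq_Fs {n m : ℕ} (h : act μ A n) (hm : wsucc μ A n m) : m = Fs μ A n := by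
  rw [Fs, dif_pos h]; exact h.choose_spec.2 m hm

noncomputable def aFs (n : ℕ) : ℝ≥0∞ := if h : act μ A n then (wsucc_Fs μ A h).choose else 0

lemma aFs_spec {n : ℕ} (h : act μ A n) :
    0 < aFs μ A n ∧ aFs μ A n ≤ μ n (A n) / (2 * μ (Fs μ A n) (A (Fs μ A n))) ∧
      (μ n).restrict (⋃ m ∈ {m : ℕ | m ≠ n}, A m)
        = aFs μ A n • (μ (Fs μ A n)).restrict (⋃ m ∈ {m : ℕ | m ≠ n}, A m) ∧
      μ (Fs μ A n) (A n) = 0 := by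
  rw [aFs, dif_pos h]
  exact (wsucc_Fs μ A h).choose_spec

noncomputable def ρs : ℕ → ℕ → ℝ≥0∞
  | _, 0 => 1
  | n, (k+1) => aFs μ A n * ρs (Fs μ A n) k

lemma ρs_zero (n : ℕ) : ρs μ A n 0 = 1 := rfl

lemma ρs_succ (n k : ℕ) : ρs μ A n (k+1) = aFs μ A n * ρs μ A (Fs μ A n) k := rfl

lemma ρs_succ' (n k : ℕ) : ρs μ A n (k+1) = ρs μ A n k * aFs μ A ((Fs μ A)^[k] n) := by
  induction k generalizing n with
  | zero => simp [ρs_zero, ρs_succ]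
  | succ k ih =>
      rw [ρs_succ, ih (Fs μ A n), ρs_succ, mul_assoc, Function.iterate_succ_apply]

/-- "The first `k` iterates of `n` under `Fs` are all active." -/
def pact (n k : ℕ) : Prop := ∀ i, i < k → act μ A ((Fs μ A)^[i] n)

lemma pact_shift {n k : ℕ} (h : pact μ A n (k+1)) : pact μ A (Fs μ A n) k := by
  intro i hi
  have := h (i+1) (by omega)
  rwa [Function.iterate_succ_apply] at this

lemma pact_mono {n k k' : ℕ} (hk : k ≤ k') (h : pact μ A n k') : pact μ A n k :=
  fun i hi => h i (lt_of_lt_of_le hi hk)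

end aux

/-- `|ν E| ≤ |ν|(E)` for a signed measure. -/
lemma abs_apply_le_totalVariation {Ω : Type*} [MeasurableSpace Ω] (ν : SignedMeasure Ω)
    {E : Set Ω} (hE : MeasurableSet E) : |ν E| ≤ (ν.totalVariation E).toReal := by
  conv_lhs => rw [← ν.toSignedMeasure_toJordanDecomposition]
  rw [MeasureTheory.JordanDecomposition.toSignedMeasure, Measure.toSignedMeasure_sub_apply hE,
    SignedMeasure.totalVariation, Measure.add_apply,
    ENNReal.toReal_add (measure_ne_top _ _) (measure_ne_top _ _)]
  have h1 := ENNReal.toReal_nonneg (a := ν.toJordanDecomposition.posPart E)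
  have h2 := ENNReal.toReal_nonneg (a := ν.toJordanDecomposition.negPart E)
  have := abs_sub (ν.toJordanDecomposition.posPart E).toReal
    (ν.toJordanDecomposition.negPart E).toReal
  rw [abs_of_nonneg h1, abs_of_nonneg h2] at this
  simp only [measureReal_def]
  linarith

lemma geo_aux : ∀ N : ℕ, ((N : ℝ) + 1) * (1/2)^N ≤ 2 * (3/4)^N := by
  intro N
  induction N with
  | zero => norm_num
  | succ N ih =>
      have hp : ((1:ℝ)/2)^N ≤ (3/4)^N :=
        pow_le_pow_left₀ (by norm_num) (by norm_num) N
      push_cast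
      rw [pow_succ, pow_succ]
      nlinarith [pow_nonneg (show (0:ℝ) ≤ 1/2 by norm_num) N,
        pow_nonneg (show (0:ℝ) ≤ 3/4 by norm_num) N]

lemma vm_sum_apply {Ω : Type*} [MeasurableSpace Ω] (t : Finset ℕ)
    (f : ℕ → MeasureTheory.VectorMeasure Ω ℝ) (E : Set Ω) :
    (∑ n ∈ t, f n) E = ∑ n ∈ t, f n E := by
  classical
  induction t using Finset.induction_on with
  | empty => simp
  | insert _ _ h ih =>
      rw [Finset.sum_insert h, Finset.sum_insert h, MeasureTheory.VectorMeasure.add_apply, ih]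

set_option maxHeartbeats 2000000 in
/-- Lemma B of the paper: under conditions (1)–(3) on the convex combinations `μ n` of a
mutually singular family and the disjoint sets `A n`, one has
`‖Σ c_n μ_n‖ ≥ (2ε/3) Σ |c_n|`, i.e. `(μ n)` is equivalent to the `ℓ¹`-basis. -/
theorem stmt2 {Ω : Type*} [MeasurableSpace Ω] (M : Set (Measure Ω))
    (hMprob : ∀ m ∈ M, IsProbabilityMeasure m)
    (hMsing : ∀ m ∈ M, ∀ m' ∈ M, m ≠ m' → m.MutuallySingular m')
    (ε : ℝ) (hε : 0 < ε)
    (μ : ℕ → Measure Ω) (hfin : ∀ n, IsFiniteMeasure (μ n))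
    (hconv : ∀ n, ∃ (k : ℕ) (m : Fin k → Measure Ω) (w : Fin k → ℝ≥0∞),
      (∀ i, m i ∈ M) ∧ (∑ i, w i) = 1 ∧ μ n = ∑ i, w i • m i)
    (A : ℕ → Set Ω) (hmeas : ∀ n, MeasurableSet (A n))
    (hdisj : Pairwise (Function.onFun Disjoint A))
    (h1 : ∀ n, ENNReal.ofReal ε ≤ μ n (A n))
    (h2 : ∀ n, (∃! n', wsucc μ A n n') ∨ (∀ n', n' ≠ n → μ n (A n') = 0))
    (h3 : ∀ n m, n ≠ m → ¬ Relation.TransGen (wsucc μ A) n m → μ n (A m) = 0) :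
    ∀ (s : Finset ℕ) (c : ℕ → ℝ),
      (2 * ε / 3) * ∑ n ∈ s, |c n| ≤
        (((∑ n ∈ s, c n • (@Measure.toSignedMeasure Ω _ (μ n) (hfin n))).totalVariation)
          Set.univ).toReal := by
  classical
  intro s c
  -- basic facts
  have hM : ∀ n (E : Set Ω), μ n E ≠ ⊤ := fun n E => @measure_ne_top _ _ (μ n) (hfin n) E
  have hA0 : ∀ n, μ n (A n) ≠ 0 := by
    intro n h
    have h2 := h1 n
    rw [h, le_zero_iff] at h2
    exact (ENNReal.ofReal_pos.mpr hε).ne' h2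
  have hstep : ∀ n, act μ A n → ∀ j, j ≠ n → μ n (A j) = aFs μ A n * μ (Fs μ A n) (A j) :=
    fun n h j hj => wsucc_eval μ A hmeas (aFs_spec μ A h).2.2.1 hj
  have hFne : ∀ n, act μ A n → Fs μ A n ≠ n := by
    intro n h he
    have h4 := (aFs_spec μ A h).2.2.2
    rw [he] at h4
    exact hA0 n h4
  have hbd : ∀ n, act μ A n → aFs μ A n * μ (Fs μ A n) (A (Fs μ A n)) ≤ μ n (A n) / 2 := by
    intro n h
    have hx0 : (2 : ℝ≥0∞) * μ (Fs μ A n) (A (Fs μ A n)) ≠ 0 := by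
      simp [hA0 (Fs μ A n)]
    have hxt : (2 : ℝ≥0∞) * μ (Fs μ A n) (A (Fs μ A n)) ≠ ⊤ := by
      exact ENNReal.mul_ne_top (by norm_num) (hM _ _)
    have hle := (aFs_spec μ A h).2.1
    have hmul : aFs μ A n * (2 * μ (Fs μ A n) (A (Fs μ A n))) ≤ μ n (A n) :=
      (ENNReal.le_div_iff_mul_le (Or.inl hx0) (Or.inl hxt)).1 hle
    rw [ENNReal.le_div_iff_mul_le (Or.inl two_ne_zero) (Or.inl ENNReal.ofNat_ne_top)]
    calc aFs μ A n * μ (Fs μ A n) (A (Fs μ A n)) * 2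
        = aFs μ A n * (2 * μ (Fs μ A n) (A (Fs μ A n))) := by ring
      _ ≤ μ n (A n) := hmul
  have haf : ∀ n, act μ A n → aFs μ A n ≠ ⊤ := by
    intro n h ht
    have hb := hbd n h
    rw [ht, ENNReal.top_mul (hA0 (Fs μ A n))] at hb
    have : μ n (A n) / 2 < ⊤ := ENNReal.div_lt_top (hM n (A n)) two_ne_zero
    exact absurd (top_le_iff.mp hb) this.ne
  have hinact : ∀ n, ¬ act μ A n → ∀ j, j ≠ n → μ n (A j) = 0 := fun n h =>
    (h2 n).resolve_left h
  have hws : ∀ n m, wsucc μ A n m → act μ A n ∧ m = Fs μ A n := by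
    intro n m hw
    obtain ⟨a, ha0, hale, hres, hm0⟩ := hw
    have hmn : m ≠ n := by rintro rfl; exact hA0 _ hm0
    have hval : μ n (A m) = a * μ m (A m) := wsucc_eval μ A hmeas hres hmn
    by_cases h : act μ A n
    · exact ⟨h, eq_Fs μ A h ⟨a, ha0, hale, hres, hm0⟩⟩
    · exfalso
      rw [hinact n h m hmn] at hval
      rcases mul_eq_zero.mp hval.symm with h' | h'
      · exact ha0.ne' h'
      · exact hA0 m h'
  -- no return to the start
  have L1 : ∀ k n, pact μ A n k → 0 < k → (Fs μ A)^[k] n ≠ n := by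
    intro k
    induction k using Nat.strong_induction_on with
    | _ k IH =>
      intro n hp hk he
      by_cases hex : ∃ i, 0 < i ∧ i < k ∧ (Fs μ A)^[i] n = n
      · obtain ⟨i, hi0, hik, hie⟩ := hex
        exact IH i hik n (pact_mono μ A hik.le hp) hi0 hie
      · push_neg at hex
        have tel : ∀ i, 1 ≤ i → i ≤ k →
            ∃ α : ℝ≥0∞, α ≠ 0 ∧ μ (Fs μ A n) (A n) = α * μ ((Fs μ A)^[i] n) (A n) := by
          intro i
          induction i with
          | zero => omega
          | succ i ih =>
            intro h1i hik
            rcases Nat.eq_zero_or_pos i with hi0 | hi0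
            · subst hi0
              exact ⟨1, one_ne_zero, by rw [one_mul, Function.iterate_one]⟩
            · obtain ⟨α, hα, heq⟩ := ih (by omega) (by omega)
              have hact : act μ A ((Fs μ A)^[i] n) := hp i (by omega)
              have hne : (n : ℕ) ≠ (Fs μ A)^[i] n := fun hc => hex i hi0 (by omega) hc.symm
              have hstep' := hstep ((Fs μ A)^[i] n) hact n hne
              rw [← Function.iterate_succ_apply' (Fs μ A) i n] at hstep'
              refine ⟨α * aFs μ A ((Fs μ A)^[i] n),
                mul_ne_zero hα (aFs_spec μ A hact).1.ne', ?_⟩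
              rw [heq, hstep', mul_assoc]
        obtain ⟨α, hα, heq⟩ := tel k (by omega) le_rfl
        rw [he] at heq
        have h0 : μ (Fs μ A n) (A n) = 0 := (aFs_spec μ A (hp 0 hk)).2.2.2
        rw [h0] at heq
        rcases mul_eq_zero.mp heq.symm with h' | h'
        · exact hα h'
        · exact hA0 n h'
  -- distinctness of iterates
  have L2 : ∀ n k i j, pact μ A n k → i < j → j ≤ k → (Fs μ A)^[i] n ≠ (Fs μ A)^[j] n := by
    intro n k i j hp hij hjk he
    refine L1 (j - i) ((Fs μ A)^[i] n) ?_ (by omega) ?_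
    · intro l hl
      rw [← Function.iterate_add_apply]
      exact hp (l + i) (by omega)
    · rw [← Function.iterate_add_apply, show j - i + i = j from by omega]
      exact he.symm
  -- telescoping
  have L3 : ∀ k n j, pact μ A n k → (∀ i, i < k → j ≠ (Fs μ A)^[i] n) →
      μ n (A j) = ρs μ A n k * μ ((Fs μ A)^[k] n) (A j) := by
    intro k
    induction k with
    | zero => intro n j _ _; rw [ρs_zero, one_mul, Function.iterate_zero_apply]
    | succ k ihk =>
      intro n j hp hj
      have hact : act μ A n := hp 0 (by omega)
      have hjn : j ≠ n := hj 0 (by omega)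
      have h1' := hstep n hact j hjn
      have h2' := ihk (Fs μ A n) j (pact_shift μ A hp) ?_
      · rw [h1', h2', ρs_succ, mul_assoc, Function.iterate_succ_apply]
      · intro i hi
        have := hj (i+1) (by omega)
        rwa [Function.iterate_succ_apply] at this
  -- geometric bound
  have L4 : ∀ k n, pact μ A n k →
      ρs μ A n k * μ ((Fs μ A)^[k] n) (A ((Fs μ A)^[k] n)) ≤ 2⁻¹ ^ k * μ n (A n) := by
    intro k
    induction k with
    | zero => intro n _; simp [ρs_zero]
    | succ k ihk =>
      intro n hp
      have hact : act μ A n := hp 0 (by omega)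
      calc ρs μ A n (k+1) * μ ((Fs μ A)^[k+1] n) (A ((Fs μ A)^[k+1] n))
          = aFs μ A n * (ρs μ A (Fs μ A n) k *
            μ ((Fs μ A)^[k] (Fs μ A n)) (A ((Fs μ A)^[k] (Fs μ A n)))) := by
            rw [ρs_succ, mul_assoc, Function.iterate_succ_apply]
        _ ≤ aFs μ A n * (2⁻¹ ^ k * μ (Fs μ A n) (A (Fs μ A n))) :=
            mul_le_mul_right (ihk (Fs μ A n) (pact_shift μ A hp)) _
        _ = 2⁻¹ ^ k * (aFs μ A n * μ (Fs μ A n) (A (Fs μ A n))) := by ring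
        _ ≤ 2⁻¹ ^ k * (μ n (A n) / 2) := mul_le_mul_right (hbd n hact) _
        _ = 2⁻¹ ^ (k+1) * μ n (A n) := by
            rw [ENNReal.div_eq_inv_mul, pow_succ]; ring
  have hρ0' : ∀ k n, pact μ A n k → ρs μ A n k ≠ 0 := by
    intro k
    induction k with
    | zero => intro n _; rw [ρs_zero]; exact one_ne_zero
    | succ k ihk =>
      intro n hp
      rw [ρs_succ]
      exact mul_ne_zero (aFs_spec μ A (hp 0 (by omega))).1.ne' (ihk _ (pact_shift μ A hp))
  -- reachability
  have L5 : ∀ n m, μ n (A m) ≠ 0 → n ≠ m →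
      ∃ k, 0 < k ∧ pact μ A n k ∧ (Fs μ A)^[k] n = m := by
    intro n m hnm hne
    have htg : Relation.TransGen (wsucc μ A) n m := by
      by_contra h
      exact hnm (h3 n m hne h)
    clear hnm hne
    induction htg with
    | single hw =>
      obtain ⟨ha, he⟩ := hws _ _ hw
      exact ⟨1, one_pos, fun i hi => by
        have : i = 0 := by omega
        subst this; exact ha, by rw [Function.iterate_one, ← he]⟩
    | tail hbc hw ih =>
      obtain ⟨k, hk0, hkp, hke⟩ := ih
      obtain ⟨hab, hcb⟩ := hws _ _ hw
      refine ⟨k+1, by omega, ?_, ?_⟩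
      · intro i hi
        rcases Nat.lt_or_ge i k with h' | h'
        · exact hkp i h'
        · have : i = k := by omega
          subst this
          rw [hke]; exact hab
      · rw [Function.iterate_succ_apply', hke, ← hcb]
  have L5u : ∀ n k k' m, pact μ A n k → pact μ A n k' →
      (Fs μ A)^[k] n = m → (Fs μ A)^[k'] n = m → k = k' := by
    intro n k k' m hp hp' he he'
    rcases Nat.lt_trichotomy k k' with h | h | h
    · exact absurd (he.trans he'.symm) (L2 n k' k k' hp' h le_rfl)
    · exact h
    · exact absurd (he'.trans he.symm) (L2 n k k' k hp h le_rfl)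
  -- choose canonical reach lengths
  have hrx : ∀ m n, μ n (A m) ≠ 0 → n ≠ m →
      ∃ k, 0 < k ∧ pact μ A n k ∧ (Fs μ A)^[k] n = m := fun m n h h' => L5 n m h h'
  choose! kOf hk0 hkP hkF using hrx
  -- predecessor finsets
  set Q : ℕ → Finset ℕ := fun m =>
    (s.filter (fun n => μ n (A m) ≠ 0 ∧ n ≠ m)).image (fun n => (Fs μ A)^[kOf m n - 1] n)
    with hQdef
  have hQmem : ∀ m m', m' ∈ Q m → act μ A m' ∧ Fs μ A m' = m := by
    intro m m' hm'
    rw [hQdef] at hm'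
    obtain ⟨n, hn, he0⟩ := Finset.mem_image.mp hm'
    obtain ⟨hns, hnm0, hnm⟩ := Finset.mem_filter.mp hn
    have hk0' := hk0 m n hnm0 hnm
    have hkP' := hkP m n hnm0 hnm
    have hkF' := hkF m n hnm0 hnm
    have he : (Fs μ A)^[kOf m n - 1] n = m' := he0
    obtain ⟨k, hkk⟩ : ∃ k', kOf m n = k' + 1 := ⟨kOf m n - 1, by omega⟩
    have hk1 : kOf m n - 1 = k := by omega
    rw [hk1] at he
    rw [hkk] at hkF'
    constructor
    · rw [← he]; exact hkP' k (by omega)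
    · rw [← he, ← Function.iterate_succ_apply' (Fs μ A) k n]
      exact hkF'
  -- the contraction ratios
  set r : ℕ → ℝ := fun p =>
    (aFs μ A p * μ (Fs μ A p) (A (Fs μ A p))).toReal / (μ p (A p)).toReal with hrdef
  have hr0 : ∀ p, 0 ≤ r p := fun p => div_nonneg ENNReal.toReal_nonneg ENNReal.toReal_nonneg
  have hden : ∀ p, 0 < (μ p (A p)).toReal := fun p => ENNReal.toReal_pos (hA0 p) (hM p _)
  have hεle : ∀ p, ε ≤ (μ p (A p)).toReal := by
    intro p
    have := ENNReal.toReal_mono (hM p (A p)) (h1 p)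
    rwa [ENNReal.toReal_ofReal hε.le] at this
  have hrhalf : ∀ p, act μ A p → r p ≤ 1/2 := by
    intro p hp
    have hnum : (aFs μ A p * μ (Fs μ A p) (A (Fs μ A p))).toReal ≤ (μ p (A p)).toReal / 2 := by
      have h' := ENNReal.toReal_mono ((ENNReal.div_lt_top (hM p _) two_ne_zero).ne)
        (hbd p hp)
      rwa [ENNReal.toReal_div, ENNReal.toReal_ofNat] at h'
    rw [hrdef]
    rw [div_le_iff₀ (hden p)]
    linarith [hnum]
  -- the main scalar identity for one predecessor step
  have hmainterm : ∀ n m', act μ A m' → ∀ k, pact μ A n k → (Fs μ A)^[k] n = m' →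
      (μ n (A (Fs μ A m'))).toReal = r m' * (μ n (A m')).toReal := by
    intro n m' hact k hPk hke
    have hPk1 : pact μ A n (k+1) := by
      intro i hi
      rcases Nat.lt_or_ge i k with h' | h'
      · exact hPk i h'
      · have : i = k := by omega
        subst this; rw [hke]; exact hact
    have hke1 : (Fs μ A)^[k+1] n = Fs μ A m' := by
      rw [Function.iterate_succ_apply', hke]
    have e1 : μ n (A m') = ρs μ A n k * μ m' (A m') := by
      have := L3 k n m' hPk ?_
      · rwa [hke] at this
      · intro i hi hc
        exact L2 n k i k hPk hi le_rfl (hc.symm.trans hke.symm)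
    have e2 : μ n (A (Fs μ A m')) = ρs μ A n k * (aFs μ A m' * μ (Fs μ A m') (A (Fs μ A m'))) := by
      have := L3 (k+1) n (Fs μ A m') hPk1 ?_
      · rw [hke1] at this
        rw [this, ρs_succ', hke, mul_assoc]
      · intro i hi hc
        exact L2 n (k+1) i (k+1) hPk1 hi le_rfl (hc.symm.trans hke1.symm)
    rw [e1, e2, ENNReal.toReal_mul, ENNReal.toReal_mul, hrdef]
    have hd := (hden m').ne'
    field_simp
    simp only [ENNReal.toReal_mul]
    ring
  -- the key regrouping identity, for each n ∈ s
  have hkey : ∀ m, ∀ n ∈ s, (μ n (A m)).toReal =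
      (∑ m' ∈ Q m, r m' * (μ n (A m')).toReal) +
      (if n = m then (μ m (A m)).toReal else 0) := by
    intro m n hns
    by_cases hnm : n = m
    · subst hnm
      rw [if_pos rfl]
      have hz : ∀ m' ∈ Q n, r m' * (μ n (A m')).toReal = 0 := by
        intro m' hm'
        obtain ⟨hact', hF'⟩ := hQmem n m' hm'
        have hmm' : n ≠ m' := by
          rintro rfl; exact hFne n hact' hF'
        have h0 : μ n (A m') = 0 := by
          by_contra hne0
          obtain ⟨k, hk0', hkP', hkF'⟩ := L5 n m' hne0 hmm'
          refine L1 (k+1) n ?_ (by omega) ?_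
          · intro i hi
            rcases Nat.lt_or_ge i k with h' | h'
            · exact hkP' i h'
            · have : i = k := by omega
              subst this; rw [hkF']; exact hact'
          · rw [Function.iterate_succ_apply', hkF', hF']
        rw [h0]; simp
      rw [Finset.sum_eq_zero hz, zero_add]
    · rw [if_neg hnm, add_zero]
      by_cases h0 : μ n (A m) = 0
      · rw [h0]
        symm
        rw [ENNReal.toReal_zero]  -- goal: sum = 0
        apply Finset.sum_eq_zero
        intro m' hm'
        obtain ⟨hact', hF'⟩ := hQmem m m' hm'
        suffices hs0 : μ n (A m') = 0 by rw [hs0]; simp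
        by_contra hne0
        by_cases hnm' : n = m'
        · subst hnm'
          have := hstep n hact' m (fun hc => hnm hc.symm)
          rw [hF'] at this
          rw [this] at h0
          exact mul_ne_zero (aFs_spec μ A hact').1.ne' (hA0 m) h0
        · obtain ⟨k, hk0', hkP', hkF'⟩ := L5 n m' hne0 hnm'
          have hPk1 : pact μ A n (k+1) := by
            intro i hi
            rcases Nat.lt_or_ge i k with h' | h'
            · exact hkP' i h'
            · have : i = k := by omega
              subst this; rw [hkF']; exact hact'
          have hke1 : (Fs μ A)^[k+1] n = m := by
            rw [Function.iterate_succ_apply', hkF', hF']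
          have := L3 (k+1) n m hPk1 ?_
          · rw [hke1] at this
            rw [this] at h0
            exact mul_ne_zero (hρ0' (k+1) n hPk1) (hA0 m) h0
          · intro i hi hc
            exact L2 n (k+1) i (k+1) hPk1 hi le_rfl (hc.symm.trans hke1.symm)
      · -- main case : n reaches m
        have hk0' := hk0 m n h0 hnm
        have hkP' := hkP m n h0 hnm
        have hkF' := hkF m n h0 hnm
        set p := (Fs μ A)^[kOf m n - 1] n with hpdef
        have hpQ : p ∈ Q m := by
          rw [hQdef]
          exact Finset.mem_image.mpr ⟨n, Finset.mem_filter.mpr ⟨hns, h0, hnm⟩, rfl⟩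
        have hactp : act μ A p := hkP' (kOf m n - 1) (by omega)
        have hFp : Fs μ A p = m := by
          obtain ⟨k, hkk⟩ : ∃ k', kOf m n = k' + 1 := ⟨kOf m n - 1, by omega⟩
          have hk1 : kOf m n - 1 = k := by omega
          rw [hkk] at hkF'
          rw [hpdef, hk1, ← Function.iterate_succ_apply' (Fs μ A) k n]
          exact hkF'
        rw [Finset.sum_eq_single_of_mem p hpQ ?_]
        · have := hmainterm n p hactp (kOf m n - 1) (pact_mono μ A (by omega) hkP') rfl
          rw [hFp] at this
          exact this
        · intro m' hm' hne
          obtain ⟨hact', hF'⟩ := hQmem m m' hm'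
          suffices hs0 : μ n (A m') = 0 by rw [hs0]; simp
          by_contra hne0
          by_cases hnm' : n = m'
          · -- then kOf m n = 1 and p = n = m'
            apply hne
            have hP1 : pact μ A n 1 := by
              intro i hi
              have : i = 0 := by omega
              subst this
              rw [Function.iterate_zero_apply, hnm']; exact hact'
            have hF1 : (Fs μ A)^[1] n = m := by
              rw [Function.iterate_one, hnm', hF']
            have hk1 : kOf m n = 1 := L5u n (kOf m n) 1 m hkP' hP1 hkF' hF1
            rw [hpdef, hk1]
            simp [hnm']
          · obtain ⟨k', h0', hP', hF'2⟩ := L5 n m' hne0 hnm'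
            have hPk'1 : pact μ A n (k'+1) := by
              intro i hi
              rcases Nat.lt_or_ge i k' with h' | h'
              · exact hP' i h'
              · have : i = k' := by omega
                subst this; rw [hF'2]; exact hact'
            have hke1 : (Fs μ A)^[k'+1] n = m := by
              rw [Function.iterate_succ_apply', hF'2, hF']
            have : kOf m n = k' + 1 := L5u n (kOf m n) (k'+1) m hkP' hPk'1 hkF' hke1
            apply hne
            rw [hpdef, this]
            simp [hF'2]
  -- the value sequence
  set vv : ℕ → ℝ := fun m => ∑ n ∈ s, c n * (μ n (A m)).toReal with hvvdef
  have hv : ∀ m, vv m = (∑ m' ∈ Q m, r m' * vv m') +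
      (if m ∈ s then c m * (μ m (A m)).toReal else 0) := by
    intro m
    have hterm : ∀ n ∈ s, c n * (μ n (A m)).toReal =
        (∑ m' ∈ Q m, r m' * (c n * (μ n (A m')).toReal)) +
        (if n = m then c n * (μ m (A m)).toReal else 0) := by
      intro n hn
      rw [hkey m n hn, mul_add, Finset.mul_sum, mul_ite, mul_zero]
      congr 1
      · exact Finset.sum_congr rfl fun m' _ => by ring
    rw [hvvdef]
    simp only []
    rw [Finset.sum_congr rfl hterm, Finset.sum_add_distrib, Finset.sum_comm]
    congr 1
    · exact Finset.sum_congr rfl fun m' _ => by rw [← Finset.mul_sum]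
    · exact Finset.sum_ite_eq' s m (fun n => c n * (μ m (A m)).toReal)
  have hperm : ∀ m, (if m ∈ s then |c m| * (μ m (A m)).toReal else 0) ≤
      |vv m| + ∑ m' ∈ Q m, r m' * |vv m'| := by
    intro m
    have h := hv m
    have he : (if m ∈ s then c m * (μ m (A m)).toReal else 0) =
        vv m - ∑ m' ∈ Q m, r m' * vv m' := by linarith
    have h1' : |if m ∈ s then c m * (μ m (A m)).toReal else 0| ≤
        |vv m| + ∑ m' ∈ Q m, r m' * |vv m'| := by
      rw [he]
      refine (abs_sub _ _).trans ?_
      gcongr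
      refine (Finset.abs_sum_le_sum_abs _ _).trans ?_
      refine Finset.sum_le_sum fun m' _ => ?_
      rw [abs_mul, abs_of_nonneg (hr0 m')]
    refine le_trans ?_ h1'
    split_ifs with hm
    · rw [abs_mul, abs_of_nonneg ENNReal.toReal_nonneg]
    · simp
  -- the finite horizon sets
  set SN : ℕ → Finset ℕ := fun N =>
    (s ×ˢ Finset.range (N+1)).image (fun p => (Fs μ A)^[p.2] p.1) with hSNdef
  have hsSN : ∀ N, s ⊆ SN N := by
    intro N n hn
    rw [hSNdef]
    exact Finset.mem_image.mpr ⟨(n, 0),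
      Finset.mem_product.mpr ⟨hn, Finset.mem_range.mpr (by omega)⟩, rfl⟩
  -- evaluation of the signed measure
  have hν : ∀ m, (∑ n ∈ s, c n • (@Measure.toSignedMeasure Ω _ (μ n) (hfin n))) (A m) = vv m := by
    intro m
    have h1' : (∑ n ∈ s, c n • (@Measure.toSignedMeasure Ω _ (μ n) (hfin n))) (A m)
        = ∑ n ∈ s, (c n • (@Measure.toSignedMeasure Ω _ (μ n) (hfin n))) (A m) :=
      vm_sum_apply s _ (A m)
    rw [h1', hvvdef]
    refine Finset.sum_congr rfl fun n hn => ?_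
    rw [MeasureTheory.VectorMeasure.smul_apply,
      @Measure.toSignedMeasure_apply_measurable Ω _ (μ n) (hfin n) _ (hmeas m), smul_eq_mul, measureReal_def]
  -- total variation bound
  have hτ : ∀ t : Finset ℕ, (∑ m ∈ t, |vv m|) ≤
      ((((∑ n ∈ s, c n • (@Measure.toSignedMeasure Ω _ (μ n) (hfin n)))).totalVariation)
        Set.univ).toReal := by
    intro t
    set ν := ∑ n ∈ s, c n • (@Measure.toSignedMeasure Ω _ (μ n) (hfin n)) with hνdef
    haveI : IsFiniteMeasure ν.totalVariation := by
      rw [SignedMeasure.totalVariation]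
      infer_instance
    calc ∑ m ∈ t, |vv m| = ∑ m ∈ t, |ν (A m)| := by
          refine Finset.sum_congr rfl fun m _ => ?_
          rw [hν m]
      _ ≤ ∑ m ∈ t, (ν.totalVariation (A m)).toReal :=
          Finset.sum_le_sum fun m _ => abs_apply_le_totalVariation ν (hmeas m)
      _ = (∑ m ∈ t, ν.totalVariation (A m)).toReal :=
          (ENNReal.toReal_sum fun m _ => measure_ne_top _ _).symm
      _ = (ν.totalVariation (⋃ m ∈ t, A m)).toReal := by
          rw [measure_biUnion_finset (fun a _ b _ hab => hdisj hab) (fun m _ => hmeas m)]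
      _ ≤ (ν.totalVariation Set.univ).toReal :=
          ENNReal.toReal_mono (measure_ne_top _ _) (measure_mono (Set.subset_univ _))
  -- the constant
  set CC : ℝ := ∑ n ∈ s, |c n| * (μ n (A n)).toReal with hCCdef
  have hCC0 : 0 ≤ CC := Finset.sum_nonneg fun n _ =>
    mul_nonneg (abs_nonneg _) ENNReal.toReal_nonneg
  -- the leak bound
  have hleak : ∀ N m', m' ∉ SN N → |vv m'| ≤ (1/2)^N * CC := by
    intro N m' hm'
    have hkey' : ∀ n ∈ s, (μ n (A m')).toReal ≤ (1/2)^N * (μ n (A n)).toReal := by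
      intro n hns
      by_cases h0 : μ n (A m') = 0
      · rw [h0]
        simp only [ENNReal.toReal_zero]
        positivity
      · have hnm : n ≠ m' := by
          rintro rfl
          exact hm' (hsSN N hns)
        obtain ⟨k, hk0', hkP', hkF'⟩ := L5 n m' h0 hnm
        have hkN : N < k := by
          by_contra hcon
          push_neg at hcon
          apply hm'
          rw [hSNdef]
          exact Finset.mem_image.mpr ⟨(n, k),
            Finset.mem_product.mpr ⟨hns, Finset.mem_range.mpr (by omega)⟩, hkF'⟩
        have hEN : μ n (A m') ≤ 2⁻¹^k * μ n (A n) := by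
          have he3 : μ n (A m') = ρs μ A n k * μ ((Fs μ A)^[k] n) (A ((Fs μ A)^[k] n)) := by
            have := L3 k n m' hkP' ?_
            · rw [this, hkF']
            · intro i hi hc
              exact L2 n k i k hkP' hi le_rfl (hc.symm.trans hkF'.symm)
          rw [he3]
          exact L4 k n hkP'
        have ht : (2⁻¹ : ℝ≥0∞)^k * μ n (A n) ≠ ⊤ :=
          ENNReal.mul_ne_top (ENNReal.pow_ne_top (ENNReal.inv_ne_top.mpr two_ne_zero))
            (hM n (A n))
        have := ENNReal.toReal_mono ht hEN
        rw [ENNReal.toReal_mul, ENNReal.toReal_pow, ENNReal.toReal_inv,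
          ENNReal.toReal_ofNat] at this
        refine this.trans ?_
        have hpow : ((2:ℝ)⁻¹)^k ≤ (1/2)^N := by
          rw [show (2:ℝ)⁻¹ = 1/2 by norm_num]
          exact pow_le_pow_of_le_one (by norm_num) (by norm_num) (by omega)
        exact mul_le_mul_of_nonneg_right hpow ENNReal.toReal_nonneg
    calc |vv m'| ≤ ∑ n ∈ s, |c n| * (μ n (A m')).toReal := by
          rw [hvvdef]
          refine (Finset.abs_sum_le_sum_abs _ _).trans ?_
          refine Finset.sum_le_sum fun n _ => ?_
          rw [abs_mul, abs_of_nonneg ENNReal.toReal_nonneg]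
      _ ≤ ∑ n ∈ s, |c n| * ((1/2)^N * (μ n (A n)).toReal) :=
          Finset.sum_le_sum fun n hn =>
            mul_le_mul_of_nonneg_left (hkey' n hn) (abs_nonneg _)
      _ = (1/2)^N * CC := by
          rw [hCCdef, Finset.mul_sum]
          exact Finset.sum_congr rfl fun n _ => by ring
  -- disjointness of the predecessor sets
  have hQdisj : ∀ N, (↑(SN N) : Set ℕ).PairwiseDisjoint Q := by
    intro N m1 _ m2 _ hne
    refine Finset.disjoint_left.mpr fun x hx1 hx2 => ?_
    exact hne (((hQmem m1 x hx1).2).symm.trans ((hQmem m2 x hx2).2))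
  -- the main estimate for each horizon
  set T := ((((∑ n ∈ s, c n • (@Measure.toSignedMeasure Ω _ (μ n) (hfin n)))).totalVariation)
      Set.univ).toReal with hTdef
  have hmain : ∀ N : ℕ, ε * (∑ n ∈ s, |c n|) ≤
      3/2 * T + ((s.card : ℝ) * s.card * CC) * (3/4)^N := by
    intro N
    set V := ∑ m ∈ SN N, |vv m| with hVdef
    have hVT : V ≤ T := hτ (SN N)
    have hV0 : 0 ≤ V := Finset.sum_nonneg fun m _ => abs_nonneg _
    have e1 : ε * (∑ n ∈ s, |c n|) ≤
        ∑ m ∈ SN N, (if m ∈ s then |c m| * (μ m (A m)).toReal else 0) := by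
      rw [Finset.mul_sum]
      calc ∑ n ∈ s, ε * |c n| ≤ ∑ n ∈ s, |c n| * (μ n (A n)).toReal := by
            refine Finset.sum_le_sum fun n _ => ?_
            rw [mul_comm]
            exact mul_le_mul_of_nonneg_left (hεle n) (abs_nonneg _)
        _ = ∑ n ∈ s, (if n ∈ s then |c n| * (μ n (A n)).toReal else 0) :=
            Finset.sum_congr rfl fun n hn => by rw [if_pos hn]
        _ ≤ ∑ m ∈ SN N, (if m ∈ s then |c m| * (μ m (A m)).toReal else 0) := by
            refine Finset.sum_le_sum_of_subset_of_nonneg (hsSN N) fun m _ _ => ?_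
            split_ifs <;> positivity
    have e2 : ∑ m ∈ SN N, (if m ∈ s then |c m| * (μ m (A m)).toReal else 0) ≤
        V + ∑ m ∈ SN N, ∑ m' ∈ Q m, r m' * |vv m'| := by
      calc ∑ m ∈ SN N, (if m ∈ s then |c m| * (μ m (A m)).toReal else 0)
          ≤ ∑ m ∈ SN N, (|vv m| + ∑ m' ∈ Q m, r m' * |vv m'|) :=
            Finset.sum_le_sum fun m _ => hperm m
        _ = V + ∑ m ∈ SN N, ∑ m' ∈ Q m, r m' * |vv m'| := by
            rw [Finset.sum_add_distrib, hVdef]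
    have e3a : ∑ m ∈ SN N, ∑ m' ∈ Q m, r m' * |vv m'| ≤
        1/2 * ∑ m' ∈ (SN N).biUnion Q, |vv m'| := by
      rw [Finset.sum_biUnion (hQdisj N), Finset.mul_sum]
      refine Finset.sum_le_sum fun m hm => ?_
      rw [Finset.mul_sum]
      refine Finset.sum_le_sum fun m' hm' => ?_
      exact mul_le_mul_of_nonneg_right (hrhalf m' (hQmem m m' hm').1) (abs_nonneg _)
    have e3b : ∑ m' ∈ (SN N).biUnion Q, |vv m'| ≤
        V + ((s.card : ℝ) * (N+1) * s.card) * ((1/2)^N * CC) := by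
      set B := (SN N).biUnion Q with hBdef
      have hsplit : ∑ m' ∈ B, |vv m'| =
          ∑ m' ∈ B ∩ SN N, |vv m'| + ∑ m' ∈ B \ SN N, |vv m'| :=
        (Finset.sum_inter_add_sum_sdiff B (SN N) _).symm
      have hin : ∑ m' ∈ B ∩ SN N, |vv m'| ≤ V :=
        Finset.sum_le_sum_of_subset_of_nonneg (Finset.inter_subset_right)
          (fun m _ _ => abs_nonneg _)
      have hout : ∑ m' ∈ B \ SN N, |vv m'| ≤
          ((B \ SN N).card : ℝ) * ((1/2)^N * CC) := by
        calc ∑ m' ∈ B \ SN N, |vv m'| ≤ ∑ m' ∈ B \ SN N, (1/2)^N * CC :=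
              Finset.sum_le_sum fun m' hm' =>
                hleak N m' (Finset.mem_sdiff.mp hm').2
          _ = ((B \ SN N).card : ℝ) * ((1/2)^N * CC) := by
              rw [Finset.sum_const, nsmul_eq_mul]
      have hcard : ((B \ SN N).card : ℝ) ≤ (s.card : ℝ) * (N+1) * s.card := by
        have hc1 : (B \ SN N).card ≤ B.card := Finset.card_le_card (Finset.sdiff_subset)
        have hc2 : B.card ≤ ∑ m ∈ SN N, (Q m).card := Finset.card_biUnion_le
        have hc3 : ∀ m, (Q m).card ≤ s.card := by
          intro m
          rw [hQdef]
          exact Finset.card_image_le.trans ((Finset.card_filter_le _ _))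
        have hc4 : (SN N).card ≤ s.card * (N+1) := by
          rw [hSNdef]
          refine Finset.card_image_le.trans ?_
          rw [Finset.card_product, Finset.card_range]
        have : B.card ≤ s.card * (N+1) * s.card := by
          calc B.card ≤ ∑ m ∈ SN N, (Q m).card := hc2
            _ ≤ ∑ _m ∈ SN N, s.card := Finset.sum_le_sum fun m _ => hc3 m
            _ = (SN N).card * s.card := by rw [Finset.sum_const, smul_eq_mul]
            _ ≤ s.card * (N+1) * s.card := Nat.mul_le_mul_right _ hc4
        have := hc1.trans this
        calc ((B \ SN N).card : ℝ) ≤ ((s.card * (N+1) * s.card : ℕ) : ℝ) :=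
              Nat.cast_le.mpr this
          _ = (s.card : ℝ) * (N+1) * s.card := by push_cast; ring
      have hnn : 0 ≤ (1/2:ℝ)^N * CC := by positivity
      calc ∑ m' ∈ B, |vv m'| = ∑ m' ∈ B ∩ SN N, |vv m'| + ∑ m' ∈ B \ SN N, |vv m'| := hsplit
        _ ≤ V + ((s.card : ℝ) * (N+1) * s.card) * ((1/2)^N * CC) := by
            refine add_le_add hin (hout.trans ?_)
            exact mul_le_mul_of_nonneg_right hcard hnn
    have hgeo := geo_aux N
    have hc0 : (0:ℝ) ≤ (s.card : ℝ) * s.card := by positivity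
    have h34 : (0:ℝ) ≤ (3/4)^N := by positivity
    have h12 : (0:ℝ) ≤ (1/2)^N := by positivity
    have hfinal1 : ((s.card : ℝ) * (N+1) * s.card) * ((1/2)^N * CC) ≤
        ((s.card : ℝ) * s.card * CC) * (2 * (3/4)^N) := by
      have : ((s.card : ℝ) * (N+1) * s.card) * ((1/2)^N * CC)
          = ((s.card : ℝ) * s.card * CC) * (((N:ℝ)+1) * (1/2)^N) := by push_cast; ring
      rw [this]
      refine mul_le_mul_of_nonneg_left hgeo ?_
      positivity
    -- combine
    have : ε * (∑ n ∈ s, |c n|) ≤ V + 1/2 * (V + ((s.card : ℝ) * s.card * CC) * (2 * (3/4)^N)) := by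
      have := e1.trans e2
      have h' := e3a.trans (by linarith [e3b, hfinal1] :
        1/2 * ∑ m' ∈ (SN N).biUnion Q, |vv m'| ≤
          1/2 * (V + ((s.card : ℝ) * s.card * CC) * (2 * (3/4)^N)))
      linarith
    linarith
  -- pass to the limit
  have hfinal : ε * (∑ n ∈ s, |c n|) ≤ 3/2 * T := by
    refine le_of_forall_pos_le_add fun δ hδ => ?_
    set K := (s.card : ℝ) * s.card * CC with hKdef
    have hK0 : 0 ≤ K := by
      rw [hKdef]
      exact mul_nonneg (mul_nonneg (Nat.cast_nonneg _) (Nat.cast_nonneg _)) hCC0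
    obtain ⟨N, hN⟩ := exists_pow_lt_of_lt_one (div_pos hδ (by linarith : (0:ℝ) < K + 1))
      (by norm_num : (3:ℝ)/4 < 1)
    refine (hmain N).trans ?_
    have h34 : (0:ℝ) ≤ (3/4)^N := by positivity
    have : K * (3/4)^N ≤ δ := by
      have h1' : K * (3/4)^N ≤ (K+1) * (3/4)^N := by nlinarith
      have hpos : (0:ℝ) < K + 1 := by linarith
      have h2' : (K+1) * (3/4)^N < (K+1) * (δ/(K+1)) :=
        mul_lt_mul_of_pos_left hN hpos
      have h3' : (K+1) * (δ/(K+1)) = δ := by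
        rw [mul_comm]
        exact div_mul_cancel₀ δ hpos.ne'
      linarith
    linarith
  have hT0 : 0 ≤ T := ENNReal.toReal_nonneg
  linarith
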